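/- Let A be a set, let m, k, ℓ ≥ 1 be integers, and let t_0,…,t_{k+1} : A^{m+2} → A be operations satisfying the Jónsson-type condition (B). Let α be a tolerance with respect to the operations t_0,…,t_{k+1}, and let R, S_0, S_1, …, S_ℓ be reflexive relations on A, each compatible with every t_i, such that R = S_0 ∘ S_1 ∘ ⋯ ∘ S_ℓ. Set Θ = (α ∩ S_0) ∘ (α ∩ S_1) ∘ ⋯ ∘ (α ∩ S_ℓ). Then α ∩ (R ∘_m R^⌣) ⊆ Θ ∘_k Θ^⌣. -/

import Mathlib

/-- Relational composition: `a (Comp R S) c` iff there is `b` with `a R b` and `b S c`. -/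
def Comp {A : Type*} (R S : A → A → Prop) : A → A → Prop :=
  fun a c => ∃ b, R a b ∧ S b c

/-- `AltComp R S m` is the alternating composition `R ∘ S ∘ R ∘ ⋯` with exactly `m` factors. -/
def AltComp {A : Type*} : (R S : A → A → Prop) → ℕ → A → A → Prop
  | _, _, 0 => Eq
  | R, _, 1 => R
  | R, S, (n+2) => Comp R (AltComp S R (n+1))

/-- Converse relation. -/
def Conv {A : Type*} (R : A → A → Prop) : A → A → Prop := fun a b => R b a

/-- Intersection of relations. -/
def InterRel {A : Type*} (R S : A → A → Prop) : A → A → Prop := fun a b => R a b ∧ S a b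

/-- `RelPow R n` is `R ∘ R ∘ ⋯ ∘ R` with `n` factors. -/
def RelPow {A : Type*} (R : A → A → Prop) : ℕ → A → A → Prop
  | 0 => Eq
  | 1 => R
  | n+2 => Comp R (RelPow R (n+1))

/-- Compatibility of a relation with a ternary operation. -/
def Compat3 {A : Type*} (f : A → A → A → A) (R : A → A → Prop) : Prop :=
  ∀ a a' b b' c c', R a a' → R b b' → R c c' → R (f a b c) (f a' b' c')

/-- Compatibility of a relation with an `n`-ary operation. -/
def CompatV {A : Type*} {n : ℕ} (f : (Fin n → A) → A) (R : A → A → Prop) : Prop :=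
  ∀ a b : Fin n → A, (∀ i, R (a i) (b i)) → R (f a) (f b)

/-- Composition `S 0 ∘ S 1 ∘ ⋯ ∘ S (n-1)` of a family of `n` relations. -/
def FamComp {A : Type*} : (n : ℕ) → (Fin n → A → A → Prop) → A → A → Prop
  | 0, _ => Eq
  | 1, S => S 0
  | n+2, S => Comp (S 0) (FamComp (n+1) (fun i => S i.succ))

/-- The substitution `x_0, x_0, x_2, x_2, x_4, x_4, …` (arguments identified in
consecutive pairs starting from the first two). -/
def EvenPair {A : Type*} (m : ℕ) (x : Fin (m+2) → A) : Fin (m+2) → A :=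
  fun j => x ⟨2 * (j.val / 2), by have := j.isLt; omega⟩

/-- The substitution `x_0, x_1, x_1, x_3, x_3, …` (arguments identified in
consecutive pairs starting from the second and third). -/
def OddPair {A : Type*} (m : ℕ) (x : Fin (m+2) → A) : Fin (m+2) → A :=
  fun j => x ⟨2 * ((j.val + 1) / 2) - 1, by have := j.isLt; omega⟩


section Helpers

variable {A : Type*}

theorem chain_of_famComp : ∀ (n : ℕ) (S : Fin n → A → A → Prop) (x y : A),
    FamComp n S x y → ∃ g : ℕ → A, g 0 = x ∧ g n = y ∧ ∀ q : Fin n, S q (g q) (g (q+1)) := by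
  intro n
  induction n using Nat.twoStepInduction with
  | zero =>
    intro S x y h
    exact ⟨fun _ => x, rfl, (h : x = y).symm ▸ rfl, fun q => q.elim0⟩
  | one =>
    intro S x y h
    refine ⟨fun j => if j = 0 then x else y, by simp, by simp, ?_⟩
    intro q
    have hq : q = 0 := Subsingleton.elim _ _
    subst hq
    have h' : S 0 x y := h
    simpa using h'
  | more n _ ih =>
    intro S x y h
    obtain ⟨b, hxb, hrest⟩ := (h : Comp (S 0) (FamComp (n+1) (fun i => S i.succ)) x y)
    obtain ⟨g', hg0, hg1, hgs⟩ := ih (fun i => S i.succ) b y hrest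
    refine ⟨fun j => if j = 0 then x else g' (j - 1), by simp, ?_, ?_⟩
    · simpa using hg1
    · intro q
      rcases Fin.eq_zero_or_eq_succ q with hq | ⟨r, hq⟩
      · subst hq
        simpa [hg0] using hxb
      · subst hq
        have := hgs r
        have hv : (r.succ : ℕ) = (r : ℕ) + 1 := rfl
        simpa [hv] using this

theorem chain_of_altComp : ∀ (n : ℕ) (R S : A → A → Prop) (a c : A),
    AltComp R S n a c → ∃ u : ℕ → A, u 0 = a ∧ (∀ j, n ≤ j → u j = c) ∧
      ∀ j < n, if j % 2 = 0 then R (u j) (u (j+1)) else S (u j) (u (j+1)) := by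
  intro n
  induction n using Nat.twoStepInduction with
  | zero =>
    intro R S a c h
    exact ⟨fun _ => a, rfl, fun j _ => (h : a = c) ▸ rfl, fun j hj => absurd hj (by omega)⟩
  | one =>
    intro R S a c h
    refine ⟨fun j => if j = 0 then a else c, by simp, fun j hj => by simp [show j ≠ 0 by omega], ?_⟩
    intro j hj
    have hj0 : j = 0 := by omega
    subst hj0
    have h' : R a c := h
    simpa using h'
  | more n _ ih =>
    intro R S a c h
    obtain ⟨b, hab, hrest⟩ := (h : Comp R (AltComp S R (n+1)) a c)
    obtain ⟨u', hu0, huc, hus⟩ := ih S R b c hrest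
    refine ⟨fun j => if j = 0 then a else u' (j - 1), by simp, ?_, ?_⟩
    · intro j hj
      simp only [if_neg (show j ≠ 0 by omega)]
      exact huc (j-1) (by omega)
    · intro j hj
      by_cases hj0 : j = 0
      · subst hj0
        simpa [hu0] using hab
      · have hlt : j - 1 < n + 1 := by omega
        have := hus (j-1) hlt
        by_cases hp : j % 2 = 0
        · rw [if_neg (by omega)] at this
          rw [if_pos hp]
          simp only [if_neg hj0, if_neg (show j + 1 ≠ 0 by omega)]
          rw [show j + 1 - 1 = j - 1 + 1 by omega]
          exact this
        · rw [if_pos (by omega)] at this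
          rw [if_neg hp]
          simp only [if_neg hj0, if_neg (show j + 1 ≠ 0 by omega)]
          rw [show j + 1 - 1 = j - 1 + 1 by omega]
          exact this

theorem famComp_of_chain : ∀ (n : ℕ) (S : Fin n → A → A → Prop) (u : ℕ → A),
    (∀ q : Fin n, S q (u q) (u (q+1))) → FamComp n S (u 0) (u n) := by
  intro n
  induction n using Nat.twoStepInduction with
  | zero => intro S u _; rfl
  | one =>
    intro S u h
    exact (by simpa using h 0 : S 0 (u 0) (u 1))
  | more n _ ih =>
    intro S u h
    refine ⟨u 1, by simpa using h 0, ?_⟩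
    have := ih (fun i => S i.succ) (fun j => u (j+1)) ?_
    · exact this
    · intro q
      have := h q.succ
      have hv : (q.succ : ℕ) = (q : ℕ) + 1 := rfl
      simpa [hv] using this

theorem altComp_of_chain : ∀ (n : ℕ) (R S : A → A → Prop) (u : ℕ → A),
    (∀ j < n, if j % 2 = 0 then R (u j) (u (j+1)) else S (u j) (u (j+1))) →
    AltComp R S n (u 0) (u n) := by
  intro n
  induction n using Nat.twoStepInduction with
  | zero => intro R S u _; rfl
  | one =>
    intro R S u h
    exact (by simpa using h 0 (by omega) : R (u 0) (u 1))
  | more n _ ih =>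
    intro R S u h
    refine ⟨u 1, by simpa using h 0 (by omega), ?_⟩
    exact ih S R (fun j => u (j+1)) (by
      intro j hj
      have := h (j+1) (by omega)
      by_cases hp : j % 2 = 0
      · rw [if_pos hp]
        rw [if_neg (by omega)] at this
        exact this
      · rw [if_neg hp]
        rw [if_pos (by omega)] at this
        exact this)

end Helpers

theorem stmt0 {A : Type*} (m k ℓ : ℕ) (hm : 1 ≤ m) (hk : 1 ≤ k) (hℓ : 1 ≤ ℓ)
    (t : Fin (k+2) → (Fin (m+2) → A) → A)
    (hB1 : ∀ x : Fin (m+2) → A, t 0 x = x 0)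
    (hB2 : ∀ (i : Fin (k+2)) (x : Fin (m+2) → A), x (Fin.last (m+1)) = x 0 → t i x = x 0)
    (hB3even : ∀ (i : ℕ) (hi : i ≤ k), i % 2 = 0 →
      ∀ x : Fin (m+2) → A, t ⟨i, by omega⟩ (EvenPair m x) = t ⟨i+1, by omega⟩ (EvenPair m x))
    (hB3odd : ∀ (i : ℕ) (hi : i ≤ k), i % 2 = 1 →
      ∀ x : Fin (m+2) → A, t ⟨i, by omega⟩ (OddPair m x) = t ⟨i+1, by omega⟩ (OddPair m x))
    (hB4 : ∀ x : Fin (m+2) → A, t (Fin.last (k+1)) x = x (Fin.last (m+1)))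
    (α : A → A → Prop)
    (hαrefl : ∀ a, α a a) (hαsymm : ∀ a b, α a b → α b a)
    (hαcompat : ∀ i, CompatV (t i) α)
    (R : A → A → Prop) (S : Fin (ℓ+1) → A → A → Prop)
    (hRrefl : ∀ a, R a a) (hRcompat : ∀ i, CompatV (t i) R)
    (hSrefl : ∀ q a, S q a a) (hScompat : ∀ q i, CompatV (t i) (S q))
    (hR : R = FamComp (ℓ+1) S)
    (Θ : A → A → Prop) (hΘ : Θ = FamComp (ℓ+1) (fun q => InterRel α (S q))) :
    ∀ a c, InterRel α (AltComp R (Conv R) m) a c → AltComp Θ (Conv Θ) k a c := by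
  intro a c hac0
  obtain ⟨hac, hAlt⟩ := hac0
  obtain ⟨z, hz0, hzc, hzrel⟩ := chain_of_altComp m R (Conv R) a c hAlt
  -- decompose each R-link into an S-chain
  have hgex : ∀ j : ℕ, ∃ g : ℕ → A,
      (j < m → (g 0 = (if j % 2 = 0 then z j else z (j+1)) ∧
        g (ℓ+1) = (if j % 2 = 0 then z (j+1) else z j) ∧
        ∀ q : Fin (ℓ+1), S q (g q) (g (q+1)))) := by
    intro j
    by_cases hj : j < m
    · have hrel := hzrel j hj
      by_cases hpar : j % 2 = 0
      · rw [if_pos hpar] at hrel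
        rw [hR] at hrel
        obtain ⟨g, h0, h1, hs⟩ := chain_of_famComp (ℓ+1) S _ _ hrel
        exact ⟨g, fun _ => ⟨by simp [hpar, h0], by simp [hpar, h1], hs⟩⟩
      · rw [if_neg hpar] at hrel
        have hrel' : R (z (j+1)) (z j) := hrel
        rw [hR] at hrel'
        obtain ⟨g, h0, h1, hs⟩ := chain_of_famComp (ℓ+1) S _ _ hrel'
        exact ⟨g, fun _ => ⟨by simp [hpar, h0], by simp [hpar, h1], hs⟩⟩
    · exact ⟨fun _ => a, fun h => absurd h hj⟩
  choose g hg using hgex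
  obtain ⟨Z, hZdef⟩ : ∃ Z : Fin (m+2) → A, ∀ j, Z j = z j.val :=
    ⟨fun j => z j.val, fun _ => rfl⟩
  obtain ⟨M, hMdef⟩ : ∃ M : ℕ → Fin (m+2) → A, ∀ q j,
      M q j = if j.val = 0 then a else if j.val = m+1 then c else g (j.val - 1) q :=
    ⟨fun q j => if j.val = 0 then a else if j.val = m+1 then c else g (j.val - 1) q,
      fun _ _ => rfl⟩
  have hM0 : ∀ q, M q 0 = a := by intro q; rw [hMdef]; simp
  have hMl : ∀ q, M q (Fin.last (m+1)) = c := by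
    intro q
    rw [hMdef]
    simp [Fin.val_last, show m + 1 ≠ 0 by omega]
  have hMstep : ∀ (q : Fin (ℓ+1)) (j : Fin (m+2)), S q (M q j) (M ((q:ℕ)+1) j) := by
    intro q j
    rw [hMdef, hMdef]
    by_cases h0 : (j:ℕ) = 0
    · simp only [if_pos h0]; exact hSrefl q a
    · by_cases h1 : (j:ℕ) = m+1
      · simp only [if_neg h0, if_pos h1]; exact hSrefl q c
      · simp only [if_neg h0, if_neg h1]
        have hlt : (j:ℕ) - 1 < m := by have := j.isLt; omega
        exact (hg ((j:ℕ)-1) hlt).2.2 q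
  have hME : M 0 = EvenPair m Z := by
    funext j
    rw [hMdef]
    simp only [EvenPair]
    rw [hZdef]
    simp only
    by_cases h0 : (j:ℕ) = 0
    · rw [if_pos h0]
      rw [show 2 * ((j:ℕ) / 2) = 0 by omega]
      exact hz0.symm
    · by_cases h1 : (j:ℕ) = m+1
      · rw [if_neg h0, if_pos h1]
        exact (hzc _ (by omega)).symm
      · rw [if_neg h0, if_neg h1]
        have hlt : (j:ℕ) - 1 < m := by have := j.isLt; omega
        have hgj := (hg ((j:ℕ)-1) hlt).1
        rw [show (j:ℕ) - 1 + 1 = (j:ℕ) by omega] at hgj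
        rw [hgj]
        by_cases hp : ((j:ℕ)-1) % 2 = 0
        · rw [if_pos hp]
          congr 1
          omega
        · rw [if_neg hp]
          congr 1
          omega
  have hMO : M (ℓ+1) = OddPair m Z := by
    funext j
    rw [hMdef]
    simp only [OddPair]
    rw [hZdef]
    simp only
    by_cases h0 : (j:ℕ) = 0
    · rw [if_pos h0]
      rw [show 2 * (((j:ℕ)+1) / 2) - 1 = 0 by omega]
      exact hz0.symm
    · by_cases h1 : (j:ℕ) = m+1
      · rw [if_neg h0, if_pos h1]
        exact (hzc _ (by omega)).symm
      · rw [if_neg h0, if_neg h1]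
        have hlt : (j:ℕ) - 1 < m := by have := j.isLt; omega
        have hgj := (hg ((j:ℕ)-1) hlt).2.1
        rw [show (j:ℕ) - 1 + 1 = (j:ℕ) by omega] at hgj
        rw [hgj]
        by_cases hp : ((j:ℕ)-1) % 2 = 0
        · rw [if_pos hp]
          congr 1
          omega
        · rw [if_neg hp]
          congr 1
          omega
  -- the key α-lemmas via (B2)
  have hαkey : ∀ (i : Fin (k+2)) (W : Fin (m+2) → A), W 0 = a → W (Fin.last (m+1)) = c →
      ∀ v, α a v → α c v → α (t i W) v := by
    intro i W h0 h1 v hav hcv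
    obtain ⟨X, hXdef⟩ : ∃ X : Fin (m+2) → A, ∀ j,
        X j = if (j:ℕ) = 0 ∨ (j:ℕ) = m+1 then v else W j :=
      ⟨fun j => if (j:ℕ) = 0 ∨ (j:ℕ) = m+1 then v else W j, fun _ => rfl⟩
    have hXv : t i X = v := by
      have h2 := hB2 i X (by rw [hXdef, hXdef]; simp [Fin.val_last])
      rw [h2, hXdef]
      simp
    have hcw : ∀ j, α (W j) (X j) := by
      intro j
      by_cases hj0 : (j:ℕ) = 0
      · have hj : j = 0 := by apply Fin.ext; simpa using hj0
        subst hj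
        rw [hXdef]
        simp only [Fin.val_zero, true_or, if_pos]
        rw [h0]
        exact hav
      · by_cases hj1 : (j:ℕ) = m+1
        · have hj : j = Fin.last (m+1) := by apply Fin.ext; simpa [Fin.val_last] using hj1
          subst hj
          rw [hXdef]
          simp only [Fin.val_last, or_true, if_pos]
          rw [h1]
          exact hcv
        · rw [hXdef]
          rw [if_neg (by tauto)]
          exact hαrefl _
    have := hαcompat i W X hcw
    rwa [hXv] at this
  have hαpair : ∀ (i i' : Fin (k+2)) (W W' : Fin (m+2) → A),
      W 0 = a → W (Fin.last (m+1)) = c → W' 0 = a → W' (Fin.last (m+1)) = c →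
      α (t i W) (t i' W') := by
    intro i i' W W' h0 h1 h0' h1'
    have hA : α (t i' W') a := hαkey i' W' h0' h1' a (hαrefl a) (hαsymm a c hac)
    have hC : α (t i' W') c := hαkey i' W' h0' h1' c hac (hαrefl c)
    exact hαkey i W h0 h1 (t i' W') (hαsymm _ _ hA) (hαsymm _ _ hC)
  -- the points of the alternating Θ-chain
  obtain ⟨p, hpdef⟩ : ∃ p : ℕ → A, ∀ i, p i =
      t ⟨min (i+1) (k+1), by omega⟩ (if i % 2 = 0 then M 0 else M (ℓ+1)) :=
    ⟨fun i => t ⟨min (i+1) (k+1), by omega⟩ (if i % 2 = 0 then M 0 else M (ℓ+1)),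
      fun _ => rfl⟩
  have hpa : p 0 = a := by
    rw [hpdef]
    rw [if_pos (show 0 % 2 = 0 by omega)]
    rw [hME]
    have h3 := hB3even 0 (by omega) rfl Z
    have e : (⟨min (0+1) (k+1), by omega⟩ : Fin (k+2)) = ⟨0+1, by omega⟩ := by
      apply Fin.ext
      simp
    rw [e, ← h3]
    have e0 : (⟨0, by omega⟩ : Fin (k+2)) = 0 := by apply Fin.ext; simp
    rw [e0, hB1]
    simp only [EvenPair]
    rw [hZdef]
    rw [show ((⟨2 * (((0 : Fin (m+2)):ℕ) / 2), by omega⟩ : Fin (m+2))).val = 0 by simp]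
    exact hz0
  have hpc : p k = c := by
    rw [hpdef]
    have e : (⟨min (k+1) (k+1), by omega⟩ : Fin (k+2)) = Fin.last (k+1) := by
      apply Fin.ext
      simp [Fin.val_last]
    rw [e, hB4]
    by_cases hp : k % 2 = 0
    · rw [if_pos hp]; exact hMl 0
    · rw [if_neg hp]; exact hMl (ℓ+1)
  -- the links
  have hlink : ∀ i, i < k →
      (if i % 2 = 0 then Θ (p i) (p (i+1)) else Θ (p (i+1)) (p i)) := by
    intro i hik
    have hi1 : i + 1 < k + 2 := by omega
    obtain ⟨u, hudef⟩ : ∃ u : ℕ → A, ∀ q, u q = t ⟨i+1, hi1⟩ (M q) :=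
      ⟨fun q => t ⟨i+1, hi1⟩ (M q), fun _ => rfl⟩
    have hchain : ∀ q : Fin (ℓ+1),
        InterRel α (S q) (u q) (u ((q:ℕ)+1)) := by
      intro q
      rw [hudef, hudef]
      refine ⟨?_, ?_⟩
      · exact hαpair _ _ _ _ (hM0 _) (hMl _) (hM0 _) (hMl _)
      · exact hScompat q _ (M q) (M ((q:ℕ)+1)) (fun j => hMstep q j)
    have hfam : FamComp (ℓ+1) (fun q => InterRel α (S q)) (u 0) (u (ℓ+1)) :=
      famComp_of_chain (ℓ+1) _ u hchain
    rw [← hΘ] at hfam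
    by_cases hpar : i % 2 = 0
    · rw [if_pos hpar]
      have h1 : u 0 = p i := by
        rw [hudef, hpdef]
        rw [if_pos hpar]
        congr 1
        apply Fin.ext
        simp
        omega
      have h2 : u (ℓ+1) = p (i+1) := by
        rw [hudef, hpdef]
        rw [if_neg (show ¬ (i+1) % 2 = 0 by omega)]
        rw [hMO]
        have h3 := hB3odd (i+1) (by omega) (by omega) Z
        rw [h3]
        congr 1
        apply Fin.ext
        simp
        omega
      rwa [h1, h2] at hfam
    · rw [if_neg hpar]
      have h1 : u 0 = p (i+1) := by
        rw [hudef, hpdef]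
        rw [if_pos (show (i+1) % 2 = 0 by omega)]
        rw [hME]
        have h3 := hB3even (i+1) (by omega) (by omega) Z
        rw [h3]
        congr 1
        apply Fin.ext
        simp
        omega
      have h2 : u (ℓ+1) = p i := by
        rw [hudef, hpdef]
        rw [if_neg hpar]
        rw [hMO]
        congr 1
        apply Fin.ext
        simp
        omega
      rwa [h1, h2] at hfam
  have hfin := altComp_of_chain k Θ (Conv Θ) p (by
    intro j hj
    have := hlink j hj
    by_cases hpar : j % 2 = 0
    · rw [if_pos hpar] at this ⊢
      exact this
    · rw [if_neg hpar] at this ⊢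
      exact this)
  rwa [hpa, hpc] at hfin
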